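/- Let w_1, …, w_n : ℝ → ℂ be twice-differentiable curves with Im w_k(t) > 0 and w_k(t) ≠ w_j(t) for k ≠ j at every time t, forming a solution of the curved n-body problem in the Poincaré upper half plane. If the curves t ↦ e^{t} w_k(t) (k = 1,…,n) also form a solution of the same system, then for every k and every t, either w_k(t) + w̄_k(t) = 0 (i.e. Re w_k(t) = 0) or 2 ẇ_k(t) = −w_k(t). -/

import Mathlib

open Complex ComplexConjugate Finset

/-- The quantity `Θ_{3,(k,j)}` appearing in the denominators of the equations of
motion of the curved `n`-body problem in the Poincaré upper half plane. -/
noncomputable def halfTheta (z w : ℂ) : ℝ :=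
  (((conj z + z) * (conj w + w)
      - 2 * (((‖z‖ ^ 2 + ‖w‖ ^ 2 : ℝ)) : ℂ)) ^ 2
    - (conj z - z) ^ 2 * (conj w - w) ^ 2).re

/-- The curves `w k` form a solution of the curved `n`-body problem in the Poincaré
upper half plane with parameter `R` and masses `m`. -/
def IsHalfPlaneSolution (R : ℝ) {n : ℕ} (m : Fin n → ℝ) (w : Fin n → ℝ → ℂ) : Prop :=
  ∀ (k : Fin n) (t : ℝ),
    deriv (deriv (w k)) t
      = 2 * (deriv (w k) t) ^ 2 / (w k t - conj (w k t))
        - (2 * (w k t - conj (w k t)) ^ 2 / (R : ℂ)) *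
          ∑ j ∈ Finset.univ.erase k,
            (m j : ℂ) * (conj (w k t) - w k t) * (conj (w j t) - w j t) ^ 2
              * (w k t - w j t) * (conj (w j t) - w k t)
              / (((halfTheta (w k t) (w j t)) ^ ((3 : ℝ) / 2) : ℝ) : ℂ)

lemma halfTheta_smul (l : ℝ) (hl : 0 ≤ l) (z u : ℂ) :
    halfTheta ((l : ℂ) * z) ((l : ℂ) * u) = l ^ 4 * halfTheta z u := by
  unfold halfTheta
  rw [← Complex.re_ofReal_mul]
  congr 1
  simp only [map_mul, Complex.conj_ofReal, map_mul, norm_mul, Complex.norm_real, Real.norm_eq_abs,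
    _root_.abs_of_nonneg hl]
  push_cast
  ring

lemma rpow_three_halves_of_neg {h : ℝ} (hh : h < 0) : h ^ ((3 : ℝ) / 2) = 0 := by
  rw [Real.rpow_def_of_neg hh]
  have : Real.cos (3 / 2 * Real.pi) = 0 := by
    rw [show (3 : ℝ) / 2 * Real.pi = Real.pi + Real.pi / 2 by ring, Real.cos_add]
    simp
  rw [this, mul_zero]

lemma div_pow_aux (a b c : ℂ) (hc : c ≠ 0) : (c ^ 5 * a) / (c ^ 6 * b) = c⁻¹ * (a / b) := by
  rw [show c ^ 6 * b = c ^ 5 * (c * b) by ring,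
    mul_div_mul_left a (c * b) (pow_ne_zero 5 hc),
    div_mul_eq_div_div_swap, div_eq_inv_mul]

/-- If a solution of the curved `n`-body problem in the Poincaré upper half plane
remains a solution after the action `w ↦ e^{t} w`, then for every `k` and `t`
either `Re w_k(t) = 0` or `2 ẇ_k(t) = −w_k(t)`. -/
theorem hyperbolic_action_invariance (R : ℝ) (hR : 0 < R) (n : ℕ) (hn : 2 ≤ n)
    (m : Fin n → ℝ) (hm : ∀ k, 0 < m k)
    (w : Fin n → ℝ → ℂ)
    (hw1 : ∀ k, Differentiable ℝ (w k))
    (hw2 : ∀ k, Differentiable ℝ (deriv (w k)))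
    (hup : ∀ k t, 0 < (w k t).im)
    (hsep : ∀ k j, k ≠ j → ∀ t, w k t ≠ w j t)
    (hsol : IsHalfPlaneSolution R m w)
    (hsol' : IsHalfPlaneSolution R m (fun k t => Real.exp t * w k t)) :
    ∀ k t, w k t + conj (w k t) = 0 ∨ 2 * deriv (w k) t = -w k t := by
  intro k t
  have hE : ∀ s : ℝ, HasDerivAt (fun r : ℝ => ((Real.exp r : ℝ) : ℂ)) ((Real.exp s : ℝ) : ℂ) s :=
    fun s => (Real.hasDerivAt_exp s).ofReal_comp
  have hderiv_u : deriv (fun s => ((Real.exp s : ℝ) : ℂ) * w k s)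
      = fun s => ((Real.exp s : ℝ) : ℂ) * (w k s + deriv (w k) s) := by
    funext s
    have h := (hE s).mul ((hw1 k s).hasDerivAt)
    have h' : HasDerivAt (fun r => ((Real.exp r : ℝ) : ℂ) * w k r)
        (((Real.exp s : ℝ) : ℂ) * (w k s + deriv (w k) s)) s := by
      exact h.congr_deriv (by ring)
    exact h'.deriv
  have hu2 : deriv (deriv (fun s => ((Real.exp s : ℝ) : ℂ) * w k s)) t
      = ((Real.exp t : ℝ) : ℂ) * (w k t + 2 * deriv (w k) t + deriv (deriv (w k)) t) := by
    rw [hderiv_u]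
    have h := (hE t).mul (((hw1 k t).hasDerivAt).add ((hw2 k t).hasDerivAt))
    have h' : HasDerivAt (fun s => ((Real.exp s : ℝ) : ℂ) * (w k s + deriv (w k) s))
        (((Real.exp t : ℝ) : ℂ) * (w k t + 2 * deriv (w k) t + deriv (deriv (w k)) t)) t := by
      exact h.congr_deriv (by simp only [Pi.add_apply]; ring)
    exact h'.deriv
  have hc : ((Real.exp t : ℝ) : ℂ) ≠ 0 := by
    simp [Complex.ofReal_ne_zero, Real.exp_ne_zero]
  have h1 := hsol k t
  have h2 := hsol' k t
  simp only [] at h2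
  rw [hu2, hderiv_u] at h2
  simp only [map_mul, Complex.conj_ofReal] at h2
  have hsum : ∑ j ∈ Finset.univ.erase k,
      (m j : ℂ) * (((Real.exp t : ℝ) : ℂ) * conj (w k t) - ((Real.exp t : ℝ) : ℂ) * w k t)
        * (((Real.exp t : ℝ) : ℂ) * conj (w j t) - ((Real.exp t : ℝ) : ℂ) * w j t) ^ 2
        * (((Real.exp t : ℝ) : ℂ) * w k t - ((Real.exp t : ℝ) : ℂ) * w j t)
        * (((Real.exp t : ℝ) : ℂ) * conj (w j t) - ((Real.exp t : ℝ) : ℂ) * w k t)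
        / (((halfTheta (((Real.exp t : ℝ) : ℂ) * w k t) (((Real.exp t : ℝ) : ℂ) * w j t)) ^ ((3 : ℝ) / 2) : ℝ) : ℂ)
      = (((Real.exp t : ℝ) : ℂ))⁻¹ * ∑ j ∈ Finset.univ.erase k,
          (m j : ℂ) * (conj (w k t) - w k t) * (conj (w j t) - w j t) ^ 2
            * (w k t - w j t) * (conj (w j t) - w k t)
            / (((halfTheta (w k t) (w j t)) ^ ((3 : ℝ) / 2) : ℝ) : ℂ) := by
    rw [Finset.mul_sum]
    refine Finset.sum_congr rfl fun j hj => ?_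
    have hl : (0 : ℝ) ≤ Real.exp t := (Real.exp_pos t).le
    have hth := halfTheta_smul (Real.exp t) hl (w k t) (w j t)
    rw [hth]
    rcases le_or_gt 0 (halfTheta (w k t) (w j t)) with hpos | hneg
    · have hr : (Real.exp t ^ 4 * halfTheta (w k t) (w j t)) ^ ((3 : ℝ) / 2)
          = Real.exp t ^ 6 * (halfTheta (w k t) (w j t)) ^ ((3 : ℝ) / 2) := by
        rw [Real.mul_rpow (by positivity) hpos]
        congr 1
        rw [← Real.rpow_natCast (Real.exp t) 4, ← Real.rpow_natCast (Real.exp t) 6,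
          ← Real.rpow_mul hl]
        norm_num
      rw [hr, Complex.ofReal_mul, Complex.ofReal_pow,
        ← div_pow_aux ((m j : ℂ) * (conj (w k t) - w k t) * (conj (w j t) - w j t) ^ 2
            * (w k t - w j t) * (conj (w j t) - w k t))
          ((((halfTheta (w k t) (w j t)) ^ ((3 : ℝ) / 2) : ℝ) : ℂ)) _ hc]
      ring
    · have h4 : Real.exp t ^ 4 * halfTheta (w k t) (w j t) < 0 :=
        mul_neg_of_pos_of_neg (by positivity) hneg
      rw [rpow_three_halves_of_neg h4, rpow_three_halves_of_neg hneg]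
      simp
  rw [hsum] at h2
  have hD : w k t - conj (w k t) ≠ 0 := by
    rw [Complex.sub_conj]
    intro h
    rcases mul_eq_zero.mp h with h | h
    · rw [Complex.ofReal_eq_zero] at h; linarith [hup k t]
    · exact Complex.I_ne_zero h
  have hR' : (R : ℂ) ≠ 0 := Complex.ofReal_ne_zero.mpr hR.ne'
  set S := ∑ j ∈ Finset.univ.erase k,
      (m j : ℂ) * (conj (w k t) - w k t) * (conj (w j t) - w j t) ^ 2
        * (w k t - w j t) * (conj (w j t) - w k t)
        / (((halfTheta (w k t) (w j t)) ^ ((3 : ℝ) / 2) : ℝ) : ℂ) with hS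
  have hcD : ((Real.exp t : ℝ) : ℂ) * w k t - ((Real.exp t : ℝ) : ℂ) * conj (w k t) ≠ 0 := by
    rw [show ((Real.exp t : ℝ) : ℂ) * w k t - ((Real.exp t : ℝ) : ℂ) * conj (w k t)
        = ((Real.exp t : ℝ) : ℂ) * (w k t - conj (w k t)) by ring]
    exact mul_ne_zero hc hD
  have key : (w k t + conj (w k t)) * (w k t + 2 * deriv (w k) t) = 0 := by
    have hce : Complex.exp (t : ℂ) ≠ 0 := Complex.exp_ne_zero _
    have hcD2 : Complex.exp (t : ℂ) * w k t - Complex.exp (t : ℂ) * conj (w k t) ≠ 0 := by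
      rw [show Complex.exp (t : ℂ) * w k t - Complex.exp (t : ℂ) * conj (w k t)
          = Complex.exp (t : ℂ) * (w k t - conj (w k t)) by ring]
      exact mul_ne_zero hce hD
    field_simp [hce, hD, hcD2, hR'] at h1 h2
    have key2 : ((R : ℂ) * Complex.exp (t : ℂ) ^ 3) *
        ((w k t + conj (w k t)) * (w k t + 2 * deriv (w k) t)) = 0 := by
      linear_combination (Complex.exp (t : ℂ)) ^ 3 * (h1 - h2)
    rcases mul_eq_zero.mp key2 with h | h
    · exact absurd h (mul_ne_zero hR' (pow_ne_zero 3 hce))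
    · exact h
  rcases mul_eq_zero.mp key with h | h
  · exact Or.inl h
  · right
    have : 2 * deriv (w k) t = -w k t := by linear_combination h
    exact this
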